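/- Assume the Setup. For each i ∈ V let P_i ∈ ℝ^{n_i×n_i} be symmetric positive definite, Θ_i ∈ ℝ^{n_{N_i}×n_{N_i}} symmetric, Â_i ∈ ℝ^{n_i×n_{N_i}}, C̃_i ∈ ℝ^{p_i×n_{N_i}}, and let A_cl ∈ ℝ^{n×n} satisfy T_i A_cl = Â_i W_i for all i ∈ V. Suppose that for every i ∈ V the inequality Â_iᵀ P_i Â_i − W_i T_iᵀ P_i T_i W_iᵀ + C̃_iᵀ C̃_i ≺ Θ_i holds, and that Σ_{i∈V} W_iᵀ Θ_i W_i ⪯ 0. Then every eigenvalue λ ∈ ℂ of A_cl (regarded as a complex matrix via the embedding ℝ ↪ ℂ) satisfies |λ| < 1; that is, the closed-loop matrix A_cl is Schur stable. -/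

import Mathlib

open Matrix
open scoped ComplexOrder

lemma quadT {m k α : Type*} [Fintype m] [Fintype k] [CommRing α]
    (A : Matrix m k α) (M : Matrix m m α) (x : k → α) :
    x ⬝ᵥ ((Aᵀ * M * A) *ᵥ x) = (A *ᵥ x) ⬝ᵥ (M *ᵥ (A *ᵥ x)) := by
  rw [Matrix.mul_assoc, ← mulVec_mulVec, dotProduct_mulVec, vecMul_transpose, ← mulVec_mulVec]

lemma quadT2 {m k α : Type*} [Fintype m] [Fintype k] [CommRing α]
    (A : Matrix m k α) (x : k → α) :
    x ⬝ᵥ ((Aᵀ * A) *ᵥ x) = (A *ᵥ x) ⬝ᵥ (A *ᵥ x) := by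
  rw [← mulVec_mulVec, dotProduct_mulVec, vecMul_transpose]

lemma quadH {m k : Type*} [Fintype m] [Fintype k]
    (A : Matrix m k ℂ) (M : Matrix m m ℂ) (x : k → ℂ) :
    star x ⬝ᵥ ((Aᴴ * M * A) *ᵥ x) = star (A *ᵥ x) ⬝ᵥ (M *ᵥ (A *ᵥ x)) := by
  rw [Matrix.mul_assoc, ← mulVec_mulVec, dotProduct_mulVec, ← star_mulVec, ← mulVec_mulVec]

lemma map_mul_ofReal {m k l : Type*} [Fintype k] (A : Matrix m k ℝ) (B : Matrix k l ℝ) :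
    (A * B).map Complex.ofReal = A.map Complex.ofReal * B.map Complex.ofReal :=
  Matrix.map_mul (f := Complex.ofRealHom)

lemma conjTranspose_map_ofReal {m k : Type*} (A : Matrix m k ℝ) :
    (A.map Complex.ofReal)ᴴ = Aᵀ.map Complex.ofReal := by
  rw [← conjTranspose_eq_transpose_of_trivial, conjTranspose_map]
  intro r
  simp

open scoped MatrixOrder in
lemma posDef_map_ofReal {k : ℕ} {S : Matrix (Fin k) (Fin k) ℝ} (hS : S.PosDef) :
    (S.map Complex.ofReal).PosDef := by
  obtain ⟨B, hBB⟩ := CStarAlgebra.nonneg_iff_eq_star_mul_self.mp hS.posSemidef.nonneg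
  have hdet : B.det ≠ 0 := by
    have h0 : (0:ℝ) < S.det := hS.det_pos
    rw [hBB, det_mul] at h0
    intro h; rw [h] at h0; simp at h0
  set Bc := B.map Complex.ofReal with hBc
  have hmap : S.map Complex.ofReal = Bcᴴ * Bc := by
    rw [hBc, conjTranspose_map_ofReal, ← map_mul_ofReal]
    rw [← conjTranspose_eq_transpose_of_trivial, ← star_eq_conjTranspose, ← hBB]
  have hdetc : Bc.det ≠ 0 := by
    rw [hBc, show B.map Complex.ofReal = Complex.ofRealHom.mapMatrix B from rfl,
      ← RingHom.map_det]
    simpa using hdet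
  refine Matrix.PosDef.of_dotProduct_mulVec_pos ?_ ?_
  · rw [hmap]; exact (posSemidef_conjTranspose_mul_self _).isHermitian
  · intro z hz
    rw [hmap, ← mulVec_mulVec, dotProduct_mulVec, ← star_mulVec]
    have hinj : Function.Injective (Bc.mulVec) :=
      mulVec_injective_iff_isUnit.mpr ((isUnit_iff_isUnit_det Bc).mpr (isUnit_iff_ne_zero.mpr hdetc))
    have hz' : Bc *ᵥ z ≠ 0 := by
      intro h
      exact hz (hinj (h.trans (Bc.mulVec_zero).symm))
    exact dotProduct_star_self_pos_iff.mpr hz'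

lemma sum_mulVec' {ι' k α : Type*} [Fintype k] [NonUnitalNonAssocSemiring α]
    (s : Finset ι') (f : ι' → Matrix k k α) (x : k → α) :
    (∑ i ∈ s, f i) *ᵥ x = ∑ i ∈ s, f i *ᵥ x := by
  classical
  induction s using Finset.cons_induction with
  | empty => simp
  | cons a s ha ih => simp [Finset.sum_insert ha, add_mulVec, ih]

lemma dot_sum_mulVec {ι' k α : Type*} [Fintype k] [NonUnitalNonAssocSemiring α]
    (s : Finset ι') (f : ι' → Matrix k k α) (x : k → α) :
    x ⬝ᵥ ((∑ i ∈ s, f i) *ᵥ x) = ∑ i ∈ s, x ⬝ᵥ (f i *ᵥ x) := by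
  classical
  induction s using Finset.cons_induction with
  | empty => simp
  | cons a s ha ih => simp [Finset.sum_insert ha, add_mulVec, dotProduct_add, ih]

/-- Lemma 1 (Schur stability): the decomposed neighborhood Lyapunov conditions with
relaxation terms imply all complex eigenvalues of the closed-loop matrix have modulus < 1. -/
theorem stmt1
    {ι : Type} [Fintype ι] [DecidableEq ι]
    (n : ℕ) (ni nN : ι → ℕ) (N : ι → Finset ι)
    (T : ∀ i : ι, Matrix (Fin (ni i)) (Fin n) ℝ)
    (W : ∀ i : ι, Matrix (Fin (nN i)) (Fin n) ℝ)
    (hNself : ∀ i : ι, i ∈ N i)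
    (hn : n = ∑ i : ι, ni i)
    (hnN : ∀ i : ι, nN i = ∑ j ∈ N i, ni j)
    (hTT : ∀ i : ι, T i * (T i)ᵀ = 1)
    (hTTzero : ∀ i j : ι, i ≠ j → T i * (T j)ᵀ = 0)
    (hTsum : ∑ i : ι, (T i)ᵀ * T i = 1)
    (hWW : ∀ i : ι, W i * (W i)ᵀ = 1)
    (hWTW : ∀ i : ι, (W i)ᵀ * W i = ∑ j ∈ N i, (T j)ᵀ * T j)
    (p : ι → ℕ)
    (P : ∀ i : ι, Matrix (Fin (ni i)) (Fin (ni i)) ℝ)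
    (hP : ∀ i : ι, (P i).PosDef)
    (Θ : ∀ i : ι, Matrix (Fin (nN i)) (Fin (nN i)) ℝ)
    (hΘ : ∀ i : ι, (Θ i).IsSymm)
    (Ahat : ∀ i : ι, Matrix (Fin (ni i)) (Fin (nN i)) ℝ)
    (Ctil : ∀ i : ι, Matrix (Fin (p i)) (Fin (nN i)) ℝ)
    (Acl : Matrix (Fin n) (Fin n) ℝ)
    (hAcl : ∀ i : ι, T i * Acl = Ahat i * W i)
    (hLyap : ∀ i : ι,
      (Θ i - ((Ahat i)ᵀ * P i * Ahat i - W i * (T i)ᵀ * P i * (T i * (W i)ᵀ)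
        + (Ctil i)ᵀ * Ctil i)).PosDef)
    (hRelax : (-(∑ i : ι, (W i)ᵀ * Θ i * W i)).PosSemidef)
    :
    ∀ μ ∈ spectrum ℂ (Acl.map Complex.ofReal), ‖μ‖ < 1 := by
  classical
  -- global Lyapunov matrix
  set Pg : Matrix (Fin n) (Fin n) ℝ := ∑ i : ι, (T i)ᵀ * P i * T i with hPgdef
  -- key selection identities
  have key : ∀ i, (W i)ᵀ * W i * (T i)ᵀ = (T i)ᵀ := by
    intro i
    rw [hWTW, Matrix.sum_mul, Finset.sum_eq_single i]
    · rw [Matrix.mul_assoc, hTT, Matrix.mul_one]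
    · intro j _ hji
      rw [Matrix.mul_assoc, hTTzero j i hji, Matrix.mul_zero]
    · intro h; exact absurd (hNself i) h
  have key2 : ∀ i, T i * ((W i)ᵀ * W i) = T i := by
    intro i
    have h := congrArg Matrix.transpose (key i)
    simpa [Matrix.transpose_mul, Matrix.mul_assoc] using h
  have sand : ∀ i, (W i)ᵀ * (W i * (T i)ᵀ * P i * (T i * (W i)ᵀ)) * W i
      = (T i)ᵀ * P i * T i := by
    intro i
    have h : (W i)ᵀ * (W i * (T i)ᵀ * P i * (T i * (W i)ᵀ)) * W i
        = ((W i)ᵀ * W i * (T i)ᵀ) * P i * (T i * ((W i)ᵀ * W i)) := by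
      simp only [Matrix.mul_assoc]
    rw [h, key, key2]
  have sandA : ∀ i, (W i)ᵀ * ((Ahat i)ᵀ * P i * Ahat i) * W i
      = Aclᵀ * ((T i)ᵀ * P i * T i) * Acl := by
    intro i
    have h1 : (Ahat i * W i)ᵀ * P i * (Ahat i * W i)
        = (T i * Acl)ᵀ * P i * (T i * Acl) := by rw [← hAcl]
    simpa [Matrix.transpose_mul, Matrix.mul_assoc] using h1
  -- the decomposition identity
  have expand : ∀ i,
      (W i)ᵀ * (Θ i - ((Ahat i)ᵀ * P i * Ahat i - W i * (T i)ᵀ * P i * (T i * (W i)ᵀ)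
        + (Ctil i)ᵀ * Ctil i)) * W i
      + (W i)ᵀ * ((Ctil i)ᵀ * Ctil i) * W i
      - (W i)ᵀ * Θ i * W i
      = (T i)ᵀ * P i * T i - Aclᵀ * ((T i)ᵀ * P i * T i) * Acl := by
    intro i
    have lin : ∀ (X Y : Matrix (Fin (nN i)) (Fin (nN i)) ℝ),
        (W i)ᵀ * (X - Y) * W i = (W i)ᵀ * X * W i - (W i)ᵀ * Y * W i := by
      intro X Y
      rw [Matrix.mul_sub, Matrix.sub_mul]
    have lin2 : ∀ (X Y : Matrix (Fin (nN i)) (Fin (nN i)) ℝ),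
        (W i)ᵀ * (X + Y) * W i = (W i)ᵀ * X * W i + (W i)ᵀ * Y * W i := by
      intro X Y
      rw [Matrix.mul_add, Matrix.add_mul]
    rw [lin, lin2, lin, sand i, sandA i]
    abel
  have hQ : Pg - Aclᵀ * Pg * Acl
      = (∑ i : ι, (W i)ᵀ * (Θ i - ((Ahat i)ᵀ * P i * Ahat i
          - W i * (T i)ᵀ * P i * (T i * (W i)ᵀ) + (Ctil i)ᵀ * Ctil i)) * W i)
        + (∑ i : ι, (W i)ᵀ * ((Ctil i)ᵀ * Ctil i) * W i)
        + (-(∑ i : ι, (W i)ᵀ * Θ i * W i)) := by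
    have h1 : Aclᵀ * Pg * Acl = ∑ i : ι, Aclᵀ * ((T i)ᵀ * P i * T i) * Acl := by
      rw [hPgdef, Finset.mul_sum, Finset.sum_mul]
    rw [hPgdef, h1, ← Finset.sum_sub_distrib, ← Finset.sum_congr rfl (fun i _ => expand i)]
    rw [Finset.sum_sub_distrib, Finset.sum_add_distrib]
    abel
  -- symmetry facts
  have hPsymm : ∀ i, (P i)ᵀ = P i := fun i => by
    rw [← conjTranspose_eq_transpose_of_trivial]; exact (hP i).isHermitian
  have hPgT : Pgᵀ = Pg := by
    rw [hPgdef, Matrix.transpose_sum]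
    refine Finset.sum_congr rfl fun i _ => ?_
    simp [Matrix.transpose_mul, Matrix.mul_assoc, hPsymm i]
  have hQHerm : (Pg - Aclᵀ * Pg * Acl).IsHermitian := by
    show (Pg - Aclᵀ * Pg * Acl)ᴴ = _
    rw [conjTranspose_eq_transpose_of_trivial, Matrix.transpose_sub, hPgT]
    congr 1
    simp [Matrix.transpose_mul, Matrix.mul_assoc, hPgT]
  -- positivity of the real quadratic form
  have hQpos : ∀ x : Fin n → ℝ, x ≠ 0 → 0 < x ⬝ᵥ ((Pg - Aclᵀ * Pg * Acl) *ᵥ x) := by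
    intro x hx
    rw [hQ]
    rw [add_mulVec, add_mulVec, dotProduct_add, dotProduct_add]
    have hWx : ∃ i, W i *ᵥ x ≠ 0 := by
      by_contra h
      push_neg at h
      apply hx
      have hTx : ∀ i, T i *ᵥ x = 0 := by
        intro i
        calc T i *ᵥ x = (T i * ((W i)ᵀ * W i)) *ᵥ x := by rw [key2]
          _ = T i *ᵥ ((W i)ᵀ *ᵥ (W i *ᵥ x)) := by rw [mulVec_mulVec, mulVec_mulVec, Matrix.mul_assoc]
          _ = 0 := by rw [h i]; simp
      have h1 : (∑ i : ι, (T i)ᵀ * T i) *ᵥ x = x := by rw [hTsum, one_mulVec]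
      rw [sum_mulVec'] at h1
      rw [← h1]
      refine (Finset.sum_eq_zero fun i _ => ?_)
      rw [← mulVec_mulVec, hTx i, mulVec_zero]
    obtain ⟨i₀, hi₀⟩ := hWx
    have t1 : 0 < x ⬝ᵥ ((∑ i : ι, (W i)ᵀ * (Θ i - ((Ahat i)ᵀ * P i * Ahat i
        - W i * (T i)ᵀ * P i * (T i * (W i)ᵀ) + (Ctil i)ᵀ * Ctil i)) * W i) *ᵥ x) := by
      rw [dot_sum_mulVec]
      refine Finset.sum_pos' (fun i _ => ?_) ⟨i₀, Finset.mem_univ i₀, ?_⟩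
      · rw [quadT]
        have := (hLyap i).posSemidef.dotProduct_mulVec_nonneg (W i *ᵥ x)
        simpa using this
      · rw [quadT]
        have := (hLyap i₀).dotProduct_mulVec_pos hi₀
        simpa using this
    have t2 : 0 ≤ x ⬝ᵥ ((∑ i : ι, (W i)ᵀ * ((Ctil i)ᵀ * Ctil i) * W i) *ᵥ x) := by
      rw [dot_sum_mulVec]
      refine Finset.sum_nonneg fun i _ => ?_
      rw [quadT, quadT2]
      have := dotProduct_star_self_nonneg (Ctil i *ᵥ (W i *ᵥ x))
      simpa using this
    have t3 : 0 ≤ x ⬝ᵥ ((-(∑ i : ι, (W i)ᵀ * Θ i * W i)) *ᵥ x) := by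
      have := hRelax.dotProduct_mulVec_nonneg x
      simpa using this
    linarith
  have hQPD : (Pg - Aclᵀ * Pg * Acl).PosDef := by
    refine Matrix.PosDef.of_dotProduct_mulVec_pos hQHerm fun x hx => ?_
    have := hQpos x hx
    simpa using this
  have hPgPD : Pg.PosDef := by
    refine Matrix.PosDef.of_dotProduct_mulVec_pos ?_ ?_
    · show Pgᴴ = Pg
      rw [conjTranspose_eq_transpose_of_trivial, hPgT]
    · intro x hx
      have h1 : 0 < x ⬝ᵥ (Pg *ᵥ x) := by
        rw [hPgdef, dot_sum_mulVec]
        have hTx : ∃ i, T i *ᵥ x ≠ 0 := by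
          by_contra h
          push_neg at h
          apply hx
          have h1 : (∑ i : ι, (T i)ᵀ * T i) *ᵥ x = x := by rw [hTsum, one_mulVec]
          rw [sum_mulVec'] at h1
          rw [← h1]
          refine (Finset.sum_eq_zero fun i _ => ?_)
          rw [← mulVec_mulVec, h i, mulVec_zero]
        obtain ⟨i₀, hi₀⟩ := hTx
        refine Finset.sum_pos' (fun i _ => ?_) ⟨i₀, Finset.mem_univ i₀, ?_⟩
        · rw [quadT]
          have := (hP i).posSemidef.dotProduct_mulVec_nonneg (T i *ᵥ x)
          simpa using this
        · rw [quadT]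
          have := (hP i₀).dotProduct_mulVec_pos hi₀
          simpa using this
      simpa using h1
  -- complexify
  set Ac := Acl.map Complex.ofReal with hAcdef
  set Pc := Pg.map Complex.ofReal with hPcdef
  have hPcPD : Pc.PosDef := posDef_map_ofReal hPgPD
  have hQcPD : (Pc - Acᴴ * Pc * Ac).PosDef := by
    have hmap : (Pg - Aclᵀ * Pg * Acl).map Complex.ofReal = Pc - Acᴴ * Pc * Ac := by
      rw [Matrix.map_sub _ (by intro a b; push_cast; ring), map_mul_ofReal, map_mul_ofReal,
        conjTranspose_map_ofReal]
    rw [← hmap]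
    exact posDef_map_ofReal hQPD
  -- eigenvalue argument
  intro μ hμ
  rw [spectrum.mem_iff, Matrix.isUnit_iff_isUnit_det, isUnit_iff_ne_zero, not_not] at hμ
  obtain ⟨v, hv0, hv⟩ := Matrix.exists_mulVec_eq_zero_iff.mpr hμ
  have hv' : Ac *ᵥ v = μ • v := by
    rw [Matrix.sub_mulVec, sub_eq_zero] at hv
    rw [← hv, Algebra.algebraMap_eq_smul_one, smul_mulVec, one_mulVec]
  set sc := star v ⬝ᵥ (Pc *ᵥ v) with hscdef
  have hsc : 0 < sc.re := by
    have h := hPcPD.dotProduct_mulVec_pos hv0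
    rw [Complex.lt_def] at h
    exact h.1
  have hq : 0 < (sc - (Complex.normSq μ : ℂ) * sc).re := by
    have h := hQcPD.dotProduct_mulVec_pos hv0
    have hrw : star v ⬝ᵥ ((Pc - Acᴴ * Pc * Ac) *ᵥ v) = sc - (Complex.normSq μ : ℂ) * sc := by
      rw [Matrix.sub_mulVec, dotProduct_sub, quadH, hv']
      rw [star_smul, mulVec_smul, smul_dotProduct, dotProduct_smul]
      rw [hscdef]
      rw [Complex.normSq_eq_conj_mul_self]
      simp [smul_smul]
      ring
    rw [hrw] at h
    rw [Complex.lt_def] at h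
    exact h.1
  have hns : Complex.normSq μ < 1 := by
    rw [Complex.sub_re, Complex.re_ofReal_mul] at hq
    nlinarith
  have habs : ‖μ‖ ^ 2 < 1 := by
    rw [Complex.sq_norm]; exact hns
  nlinarith [norm_nonneg μ]
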